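/- With the data below, for each k > 0 define w_k(t, i) := (exp((T − t)·A(k))·𝟏)_i, and the optimal fees p*_k(t, i) := (1/(k·Z⁺_i·Δ⁺_i))·( 1 + log( w_k(t, i) / w_k(t, i+1) ) ) for i < 2N and m*_k(t, i) := (1/(k·Z⁻_i·Δ⁻_i))·( 1 + log( w_k(t, i) / w_k(t, i−1) ) ) for i > 0. Define also w₀(t, i) := (exp((T − t)·A₀)·𝟏)_i and the limit fees p*₀(t, i) := (1/(Z⁺_i·Δ⁺_i))·( 1 + log( w₀(t, i) / w₀(t, i+1) ) ) for i < 2N and m*₀(t, i) := (1/(Z⁻_i·Δ⁻_i))·( 1 + log( w₀(t, i) / w₀(t, i−1) ) ) for i > 0. Then for every t ∈ [0, T]: k·p*_k(t, i) tends to p*₀(t, i) as k tends to 0 from the right, for every i ∈ {0, …, 2N−1}; and k·m*_k(t, i) tends to m*₀(t, i) as k tends to 0 from the right, for every i ∈ {1, …, 2N}. -/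

import Mathlib

open Filter

section Aux
variable {n : ℕ}

lemma pow_entry_nonneg {M : Matrix (Fin n) (Fin n) ℝ} (hM : ∀ i j, 0 ≤ M i j) :
    ∀ (m : ℕ) (i j : Fin n), 0 ≤ (M ^ m) i j := by
  intro m
  induction m with
  | zero =>
    intro i j
    rw [pow_zero]
    rcases eq_or_ne i j with h | h
    · simp [Matrix.one_apply, h]
    · simp [Matrix.one_apply, h]
  | succ m ih =>
    intro i j
    rw [pow_succ, Matrix.mul_apply]
    exact Finset.sum_nonneg fun k _ => mul_nonneg (ih i k) (hM k j)

lemma exp_entry_hasSum (M : Matrix (Fin n) (Fin n) ℝ) (a b : Fin n) :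
    HasSum (fun m : ℕ => ((m.factorial : ℝ)⁻¹) * (M ^ m) a b)
      ((NormedSpace.exp M) a b) := by
  letI : NormedRing (Matrix (Fin n) (Fin n) ℝ) := Matrix.linftyOpNormedRing
  letI : NormedAlgebra ℝ (Matrix (Fin n) (Fin n) ℝ) := Matrix.linftyOpNormedAlgebra
  have h1 : HasSum (fun m : ℕ => ((m.factorial : ℝ)⁻¹) • M ^ m) (NormedSpace.exp M) :=
    NormedSpace.exp_series_hasSum_exp' M
  have h2 := h1.map
    ((Pi.evalAddMonoidHom (fun _ : Fin n => ℝ) b).comp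
      (Pi.evalAddMonoidHom (fun _ : Fin n => (Fin n) → ℝ) a))
    (continuous_id.matrix_elem a b)
  exact h2

lemma exp_mulVec_one_pos {M : Matrix (Fin n) (Fin n) ℝ} (hM : ∀ i j, 0 ≤ M i j)
    (i : Fin n) : 0 < (NormedSpace.exp M).mulVec 1 i := by
  have hnn : ∀ a b, 0 ≤ (NormedSpace.exp M) a b := fun a b =>
    (exp_entry_hasSum M a b).nonneg fun m =>
      mul_nonneg (by positivity) (pow_entry_nonneg hM m a b)
  have hdiag : (1 : ℝ) ≤ (NormedSpace.exp M) i i := by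
    have := le_hasSum (exp_entry_hasSum M i i) 0 fun m _ =>
      mul_nonneg (by positivity) (pow_entry_nonneg hM m i i)
    simpa using this
  have : (1 : ℝ) ≤ (NormedSpace.exp M).mulVec 1 i := by
    rw [Matrix.mulVec]
    calc (1:ℝ) ≤ (NormedSpace.exp M) i i := hdiag
    _ ≤ _ := by
        simpa [dotProduct] using
          Finset.single_le_sum (f := fun j => (NormedSpace.exp M) i j * 1)
            (fun j _ => by simpa using hnn i j) (Finset.mem_univ i)
  linarith

lemma exp_continuous_matrix :
    Continuous (NormedSpace.exp : Matrix (Fin n) (Fin n) ℝ → Matrix (Fin n) (Fin n) ℝ) := by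
  letI : NormedRing (Matrix (Fin n) (Fin n) ℝ) := Matrix.linftyOpNormedRing
  letI : NormedAlgebra ℝ (Matrix (Fin n) (Fin n) ℝ) := Matrix.linftyOpNormedAlgebra
  letI : NormedAlgebra ℚ (Matrix (Fin n) (Fin n) ℝ) := NormedAlgebra.restrictScalars ℚ ℝ _
  exact NormedSpace.exp_continuous

end Aux

/-- Small-`k` limit of the optimal AMM fees: as the intensity-decay parameter `k`
tends to `0` from the right, `k · p*_k(t,i)` and `k · m*_k(t,i)` converge to the
limit fees `p*₀(t,i)` and `m*₀(t,i)` built from the limit matrix `A₀`. -/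
theorem stmt8 (N : ℕ) (hN : 1 ≤ N)
    (Δp Δm Zp Zm P : Fin (2 * N + 1) → ℝ)
    (hΔp : ∀ i : Fin (2 * N + 1), (i : ℕ) < 2 * N → 0 < Δp i)
    (hΔm : ∀ i : Fin (2 * N + 1), 0 < (i : ℕ) → 0 < Δm i)
    (hZp : ∀ i : Fin (2 * N + 1), (i : ℕ) < 2 * N → 0 < Zp i)
    (hZm : ∀ i : Fin (2 * N + 1), 0 < (i : ℕ) → 0 < Zm i)
    (lp lm s T : ℝ) (hlp : 0 < lp) (hlm : 0 < lm) (hT : 0 < T)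
    (A : ℝ → Matrix (Fin (2 * N + 1)) (Fin (2 * N + 1)) ℝ)
    (hA : ∀ k : ℝ, 0 < k → ∀ i j : Fin (2 * N + 1), A k i j =
      if (j : ℕ) = (i : ℕ) then -(k * P i)
      else if (j : ℕ) = (i : ℕ) + 1 then
        lp * Real.exp (-(k * s * Δp i) - 1) * Real.exp (k * Zp i * Δp i)
      else if (j : ℕ) + 1 = (i : ℕ) then
        lm * Real.exp (k * s * Δm i - 1) * Real.exp (-(k * Zm i * Δm i))
      else 0)
    (A0 : Matrix (Fin (2 * N + 1)) (Fin (2 * N + 1)) ℝ)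
    (hA0 : ∀ i j : Fin (2 * N + 1), A0 i j =
      if (j : ℕ) = (i : ℕ) + 1 then lp * Real.exp (-1)
      else if (j : ℕ) + 1 = (i : ℕ) then lm * Real.exp (-1)
      else 0)
    (w : ℝ → ℝ → Fin (2 * N + 1) → ℝ)
    (hw : ∀ k : ℝ, 0 < k → ∀ t : ℝ,
      w k t = (NormedSpace.exp ((T - t) • A k)).mulVec 1)
    (w0 : ℝ → Fin (2 * N + 1) → ℝ)
    (hw0 : ∀ t : ℝ, w0 t = (NormedSpace.exp ((T - t) • A0)).mulVec 1)
    -- the optimal fees for decay parameter `k > 0`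
    (pstar mstar : ℝ → ℝ → Fin (2 * N + 1) → ℝ)
    (hpstar : ∀ k : ℝ, 0 < k → ∀ t : ℝ, ∀ i : Fin (2 * N + 1), ∀ h : (i : ℕ) < 2 * N,
      pstar k t i = (1 / (k * Zp i * Δp i)) *
        (1 + Real.log (w k t i / w k t ⟨(i : ℕ) + 1, by omega⟩)))
    (hmstar : ∀ k : ℝ, 0 < k → ∀ t : ℝ, ∀ i : Fin (2 * N + 1), ∀ h : 0 < (i : ℕ),
      mstar k t i = (1 / (k * Zm i * Δm i)) *
        (1 + Real.log (w k t i / w k t ⟨(i : ℕ) - 1, by omega⟩)))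
    -- the limit fees
    (pstar0 mstar0 : ℝ → Fin (2 * N + 1) → ℝ)
    (hpstar0 : ∀ t : ℝ, ∀ i : Fin (2 * N + 1), ∀ h : (i : ℕ) < 2 * N,
      pstar0 t i = (1 / (Zp i * Δp i)) *
        (1 + Real.log (w0 t i / w0 t ⟨(i : ℕ) + 1, by omega⟩)))
    (hmstar0 : ∀ t : ℝ, ∀ i : Fin (2 * N + 1), ∀ h : 0 < (i : ℕ),
      mstar0 t i = (1 / (Zm i * Δm i)) *
        (1 + Real.log (w0 t i / w0 t ⟨(i : ℕ) - 1, by omega⟩))) :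
    ∀ t ∈ Set.Icc (0 : ℝ) T,
      (∀ i : Fin (2 * N + 1), (i : ℕ) < 2 * N →
        Filter.Tendsto (fun k : ℝ => k * pstar k t i) (nhdsWithin 0 (Set.Ioi 0))
          (nhds (pstar0 t i))) ∧
      (∀ i : Fin (2 * N + 1), 0 < (i : ℕ) →
        Filter.Tendsto (fun k : ℝ => k * mstar k t i) (nhdsWithin 0 (Set.Ioi 0))
          (nhds (mstar0 t i))) := by
  intro t ht
  have hTt : 0 ≤ T - t := by linarith [ht.2]
  have hA0nn : ∀ i j, 0 ≤ A0 i j := by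
    intro i j
    rw [hA0]
    split_ifs <;> positivity
  have hM0nn : ∀ i j, 0 ≤ ((T - t) • A0) i j := fun i j => by
    rw [Matrix.smul_apply, smul_eq_mul]
    exact mul_nonneg hTt (hA0nn i j)
  have hw0pos : ∀ i, 0 < w0 t i := by
    intro i
    rw [hw0]
    exact exp_mulVec_one_pos hM0nn i
  -- convergence of A k to A0
  have hAentry : ∀ i j : Fin (2 * N + 1),
      Tendsto (fun k : ℝ => A k i j) (nhdsWithin 0 (Set.Ioi 0)) (nhds (A0 i j)) := by
    intro i j
    have hcongr : (fun k : ℝ =>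
        if (j : ℕ) = (i : ℕ) then -(k * P i)
        else if (j : ℕ) = (i : ℕ) + 1 then
          lp * Real.exp (-(k * s * Δp i) - 1) * Real.exp (k * Zp i * Δp i)
        else if (j : ℕ) + 1 = (i : ℕ) then
          lm * Real.exp (k * s * Δm i - 1) * Real.exp (-(k * Zm i * Δm i))
        else 0) =ᶠ[nhdsWithin (0:ℝ) (Set.Ioi 0)] fun k => A k i j := by
      filter_upwards [self_mem_nhdsWithin] with k hk
      exact (hA k hk i j).symm
    refine Tendsto.congr' hcongr ?_
    rw [hA0 i j]
    by_cases h1 : (j : ℕ) = (i : ℕ)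
    · have h2 : ¬ ((j : ℕ) = (i : ℕ) + 1) := by omega
      have h3 : ¬ ((j : ℕ) + 1 = (i : ℕ)) := by omega
      simp only [h1, h2, h3, if_pos, if_neg, if_true, if_false]
      have hc : Continuous fun k : ℝ => -(k * P i) := by fun_prop
      have := (hc.tendsto 0).mono_left (nhdsWithin_le_nhds (s := Set.Ioi (0:ℝ)))
      simpa using this
    · by_cases h2 : (j : ℕ) = (i : ℕ) + 1
      · simp only [h1, h2, if_neg, if_pos, if_true, if_false]
        have hc : Continuous fun k : ℝ =>
            lp * Real.exp (-(k * s * Δp i) - 1) * Real.exp (k * Zp i * Δp i) := by fun_prop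
        have := (hc.tendsto 0).mono_left (nhdsWithin_le_nhds (s := Set.Ioi (0:ℝ)))
        simpa using this
      · by_cases h3 : (j : ℕ) + 1 = (i : ℕ)
        · simp only [h1, h2, h3, if_neg, if_pos, if_true, if_false]
          have hc : Continuous fun k : ℝ =>
              lm * Real.exp (k * s * Δm i - 1) * Real.exp (-(k * Zm i * Δm i)) := by fun_prop
          have := (hc.tendsto 0).mono_left (nhdsWithin_le_nhds (s := Set.Ioi (0:ℝ)))
          simpa using this
        · simp only [h1, h2, h3, if_neg, if_false]
          exact tendsto_const_nhds
  have hAtend : Tendsto A (nhdsWithin 0 (Set.Ioi 0)) (nhds A0) := by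
    refine tendsto_pi_nhds.mpr fun i => tendsto_pi_nhds.mpr fun j => hAentry i j
  have hMt : Tendsto (fun k : ℝ => (T - t) • A k) (nhdsWithin 0 (Set.Ioi 0))
      (nhds ((T - t) • A0)) := hAtend.const_smul (T - t)
  have hexp : Tendsto (fun k : ℝ => NormedSpace.exp ((T - t) • A k))
      (nhdsWithin 0 (Set.Ioi 0)) (nhds (NormedSpace.exp ((T - t) • A0))) :=
    (exp_continuous_matrix.tendsto _).comp hMt
  have hwt : ∀ i0 : Fin (2 * N + 1),
      Tendsto (fun k : ℝ => w k t i0) (nhdsWithin 0 (Set.Ioi 0)) (nhds (w0 t i0)) := by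
    intro i0
    have hcontmv : Continuous fun X : Matrix (Fin (2 * N + 1)) (Fin (2 * N + 1)) ℝ =>
        X.mulVec 1 i0 := (continuous_apply i0).comp (continuous_id.matrix_mulVec continuous_const)
    have h := ((hcontmv.tendsto _).comp hexp : Tendsto
      (fun k : ℝ => (NormedSpace.exp ((T - t) • A k)).mulVec 1 i0)
      (nhdsWithin 0 (Set.Ioi 0)) (nhds ((NormedSpace.exp ((T - t) • A0)).mulVec 1 i0)))
    rw [← hw0 t] at h
    refine h.congr' ?_
    filter_upwards [self_mem_nhdsWithin] with k hk
    rw [hw k hk t]; rfl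
  constructor
  · intro i hi
    set i1 : Fin (2 * N + 1) := ⟨(i : ℕ) + 1, by omega⟩ with hi1
    have hratio : Tendsto (fun k : ℝ => w k t i / w k t i1) (nhdsWithin 0 (Set.Ioi 0))
        (nhds (w0 t i / w0 t i1)) := (hwt i).div (hwt i1) (ne_of_gt (hw0pos i1))
    have hrpos : 0 < w0 t i / w0 t i1 := div_pos (hw0pos i) (hw0pos i1)
    have hlog : Tendsto (fun k : ℝ => Real.log (w k t i / w k t i1))
        (nhdsWithin 0 (Set.Ioi 0)) (nhds (Real.log (w0 t i / w0 t i1))) :=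
      ((Real.continuousAt_log (ne_of_gt hrpos)).tendsto).comp hratio
    have hfinal : Tendsto (fun k : ℝ =>
        (1 / (Zp i * Δp i)) * (1 + Real.log (w k t i / w k t i1)))
        (nhdsWithin 0 (Set.Ioi 0))
        (nhds ((1 / (Zp i * Δp i)) * (1 + Real.log (w0 t i / w0 t i1)))) :=
      tendsto_const_nhds.mul (tendsto_const_nhds.add hlog)
    rw [hpstar0 t i hi]
    refine hfinal.congr' ?_
    filter_upwards [self_mem_nhdsWithin] with k hk
    rw [hpstar k hk t i hi]
    have hk' : (k : ℝ) ≠ 0 := ne_of_gt hk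
    have hZ : Zp i ≠ 0 := ne_of_gt (hZp i hi)
    have hD : Δp i ≠ 0 := ne_of_gt (hΔp i hi)
    field_simp
    ring
  · intro i hi
    set i1 : Fin (2 * N + 1) := ⟨(i : ℕ) - 1, by omega⟩ with hi1
    have hratio : Tendsto (fun k : ℝ => w k t i / w k t i1) (nhdsWithin 0 (Set.Ioi 0))
        (nhds (w0 t i / w0 t i1)) := (hwt i).div (hwt i1) (ne_of_gt (hw0pos i1))
    have hrpos : 0 < w0 t i / w0 t i1 := div_pos (hw0pos i) (hw0pos i1)
    have hlog : Tendsto (fun k : ℝ => Real.log (w k t i / w k t i1))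
        (nhdsWithin 0 (Set.Ioi 0)) (nhds (Real.log (w0 t i / w0 t i1))) :=
      ((Real.continuousAt_log (ne_of_gt hrpos)).tendsto).comp hratio
    have hfinal : Tendsto (fun k : ℝ =>
        (1 / (Zm i * Δm i)) * (1 + Real.log (w k t i / w k t i1)))
        (nhdsWithin 0 (Set.Ioi 0))
        (nhds ((1 / (Zm i * Δm i)) * (1 + Real.log (w0 t i / w0 t i1)))) :=
      tendsto_const_nhds.mul (tendsto_const_nhds.add hlog)
    rw [hmstar0 t i hi]
    refine hfinal.congr' ?_
    filter_upwards [self_mem_nhdsWithin] with k hk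
    rw [hmstar k hk t i hi]
    have hk' : (k : ℝ) ≠ 0 := ne_of_gt hk
    have hZ : Zm i ≠ 0 := ne_of_gt (hZm i hi)
    have hD : Δm i ≠ 0 := ne_of_gt (hΔm i hi)
    field_simp
    ring
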